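/- Let O be a complete DVR with finite residue field of characteristic p, let G be a profinite group, and let U and V be O[G]-modules, free of finite rank over O. Let S be the set of continuous characters ψ : G → O^× such that Hom_{O[G]}(U, V ⊗_O O(ψ)) ≠ 0, where ψ ranges over characters trivial on a fixed open subgroup (unramified-type characters determined by the image of a fixed element Frob). Suppose that whenever Hom_{O[G]}(U, V ⊗ ψ) ≠ 0, there exist Jordan–Hölder factors W of U ⊗ Frac(O) and Z of V ⊗ Frac(O) with W ≅ Z ⊗ ψ. Then, since for each of the finitely many pairs (W, Z) the character ψ is determined by det W / det Z up to a root of unity of bounded order, the set S is finite. -/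

import Mathlib

open scoped TensorProduct

/-- Let `O` be a complete DVR with finite residue field of
characteristic `p`, `G` a (Galois) group with a distinguished element `Frob` and a fixed
(open) subgroup `H` such that `G` is (topologically) generated by `Frob` together with `H`
— so that an unramified-type character `ψ : G → O^×` trivial on `H` is determined by
`ψ(Frob)`.  Let `U, V` be `O[G]`-modules free of finite rank, and let `S` be the set of
such characters `ψ` with `Hom_{O[G]}(U, V ⊗ O(ψ)) ≠ 0`.  Suppose that whenever this Hom is
nonzero there are Jordan–Hölder factors `W` of `U ⊗ Frac O` and `Z` of `V ⊗ Frac O`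
(taken from the finite families below) with `W ≅ Z ⊗ ψ`.  Then `S` is finite. -/
theorem stmt10 {p : ℕ} [Fact p.Prime]
    {O : Type*} [CommRing O] [IsDomain O] [IsDiscreteValuationRing O]
    [IsAdicComplete (IsLocalRing.maximalIdeal O) O]
    [Finite (IsLocalRing.ResidueField O)] (hp : CharP (IsLocalRing.ResidueField O) p)
    {G : Type*} [Group G] (Frob : G) (H : Subgroup G)
    (hgen : Subgroup.closure ({Frob} ∪ (H : Set G)) = ⊤)
    (K : Type*) [Field K] [Algebra O K] [IsFractionRing O K]
    -- the (finitely many) Jordan–Hölder factors of `U ⊗ K` and `V ⊗ K`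
    {ι : Type*} [Finite ι] (nW nZ : ι → ℕ) (hnZ : ∀ i, 0 < nZ i)
    (W : (i : ι) → Representation K G (Fin (nW i) → K))
    (Z : (i : ι) → Representation K G (Fin (nZ i) → K))
    (S : Set (G →* Oˣ))
    (hS : ∀ ψ ∈ S, (∀ h ∈ H, ψ h = 1) ∧
        ∃ i, ∃ e : (Fin (nW i) → K) ≃ₗ[K] (Fin (nZ i) → K),
          ∀ g x, e (W i g x) = algebraMap O K (ψ g : O) • Z i g (e x)) :
    S.Finite := by
  classical
  set f : (G →* Oˣ) → K := fun ψ => algebraMap O K ((ψ Frob : Oˣ) : O) with hf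
  have hfin : (f '' S).Finite := by
    have hsub : f '' S ⊆ ⋃ i, {x : K |
        x ^ nZ i * LinearMap.det ((Z i Frob : (Fin (nZ i) → K) →ₗ[K] _))
          = LinearMap.det ((W i Frob : (Fin (nW i) → K) →ₗ[K] _))} := by
      rintro _ ⟨ψ, hψ, rfl⟩
      obtain ⟨-, i, e, he⟩ := hS ψ hψ
      refine Set.mem_iUnion.2 ⟨i, ?_⟩
      set c : K := algebraMap O K ((ψ Frob : Oˣ) : O)
      have hW : (W i Frob : (Fin (nW i) → K) →ₗ[K] _) =
          (e.symm : _ →ₗ[K] _) ∘ₗ (c • (Z i Frob : (Fin (nZ i) → K) →ₗ[K] _)) ∘ₗ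
            (e : _ →ₗ[K] _) := by
        refine LinearMap.ext fun x => ?_
        have h2 : W i Frob x = e.symm (c • Z i Frob (e x)) := by
          rw [← he Frob x, e.symm_apply_apply]
        simp [h2]
      have hc := congrArg LinearMap.det hW
      have hconj := LinearMap.det_conj
        (c • (Z i Frob : (Fin (nZ i) → K) →ₗ[K] (Fin (nZ i) → K))) e.symm
      rw [e.symm_symm] at hconj
      rw [hconj, LinearMap.det_smul] at hc
      simpa [Module.finrank_fin_fun, mul_comm] using hc.symm
    refine Set.Finite.subset (Set.finite_iUnion fun i => ?_) hsub
    have hZunit : LinearMap.det ((Z i Frob : (Fin (nZ i) → K) →ₗ[K] _)) ≠ 0 := by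
      have h1 : LinearMap.det ((Z i Frob : (Fin (nZ i) → K) →ₗ[K] _)) *
          LinearMap.det ((Z i Frob⁻¹ : (Fin (nZ i) → K) →ₗ[K] _)) = 1 := by
        rw [← LinearMap.det_comp]
        have : (Z i Frob : (Fin (nZ i) → K) →ₗ[K] _) ∘ₗ (Z i Frob⁻¹) = LinearMap.id := by
          rw [← Module.End.mul_eq_comp, ← map_mul, mul_inv_cancel, map_one]; rfl
        rw [this, LinearMap.det_id]
      exact left_ne_zero_of_mul_eq_one h1
    set d : K := LinearMap.det ((W i Frob : (Fin (nW i) → K) →ₗ[K] _)) *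
      (LinearMap.det ((Z i Frob : (Fin (nZ i) → K) →ₗ[K] _)))⁻¹ with hd
    have : {x : K | x ^ nZ i * LinearMap.det ((Z i Frob : (Fin (nZ i) → K) →ₗ[K] _))
          = LinearMap.det ((W i Frob : (Fin (nW i) → K) →ₗ[K] _))}
        ⊆ {x : K | (Polynomial.X ^ nZ i - Polynomial.C d).IsRoot x} := by
      intro x hx
      simp only [Set.mem_setOf_eq] at hx ⊢
      have hxd : x ^ nZ i = d := by
        rw [hd, eq_mul_inv_iff_mul_eq₀ hZunit]
        linear_combination hx
      simp [Polynomial.IsRoot, hxd]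
    exact (Polynomial.finite_setOf_isRoot
      (Polynomial.X_pow_sub_C_ne_zero (hnZ i) d)).subset this
  refine Set.Finite.of_finite_image hfin ?_
  intro ψ₁ h1 ψ₂ h2 heq
  have hF : ψ₁ Frob = ψ₂ Frob := by
    ext
    exact IsFractionRing.injective O K heq
  have hH1 := (hS ψ₁ h1).1
  have hH2 := (hS ψ₂ h2).1
  ext g
  have hle : Subgroup.closure ({Frob} ∪ (H : Set G)) ≤ ψ₁.eqLocus ψ₂ := by
    rw [Subgroup.closure_le]
    rintro x (rfl | hx)
    · exact hF
    · show ψ₁ x = ψ₂ x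
      rw [hH1 x hx, hH2 x hx]
  have hgeq : ψ₁ g = ψ₂ g := hle (hgen ▸ Subgroup.mem_top g)
  exact congrArg Units.val hgeq
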